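/- For a third-order tensor A ∈ ℂ^{n1×n2×n3}, the block-circulant matrix bcirc(A) is block-diagonalized by the Kronecker DFT: (F_{n3} ⊗ I_{n1}) · bcirc(A) · (F_{n3}^{-1} ⊗ I_{n2}) = bdiag(Â), where Â is the tensor obtained by applying the DFT along the third dimension of A and bdiag(Â) is the block-diagonal matrix with diagonal blocks the frontal slices of Â. -/

import Mathlib

open Matrix Real Kronecker

/-- A third-order complex tensor represented by its frontal slices. -/
abbrev TensorC (n1 n2 n3 : ℕ) := Fin n3 → Matrix (Fin n1) (Fin n2) ℂ

noncomputable def dftMatrix (n : ℕ) : Matrix (Fin n) (Fin n) ℂ :=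
  fun j k => (Complex.exp (-2 * Real.pi * Complex.I / n)) ^ (j.val * k.val)

/-- Block-circulant matrix of a third-order tensor. -/
def bcirc {n1 n2 n3 : ℕ} (A : TensorC n1 n2 n3) :
    Matrix (Fin n3 × Fin n1) (Fin n3 × Fin n2) ℂ :=
  fun p q => A (p.1 - q.1) p.2 q.2

/-- DFT of the tensor along the third dimension: slice k is Σ_j ω^{jk} A^{(j)}. -/
noncomputable def dftSlices {n1 n2 n3 : ℕ} (A : TensorC n1 n2 n3) : TensorC n1 n2 n3 :=
  fun k => ∑ j : Fin n3,
    ((Complex.exp (-2 * Real.pi * Complex.I / n3)) ^ (j.val * k.val)) • A j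

/-- Block-diagonal matrix whose diagonal blocks are the frontal slices of a tensor. -/
def bdiag {n1 n2 n3 : ℕ} (A : TensorC n1 n2 n3) :
    Matrix (Fin n3 × Fin n1) (Fin n3 × Fin n2) ℂ :=
  fun p q => if p.1 = q.1 then A p.1 p.2 q.2 else 0

lemma omega_eq_inv (n : ℕ) :
    Complex.exp (-2 * Real.pi * Complex.I / n) =
      (Complex.exp (2 * Real.pi * Complex.I / n))⁻¹ := by
  rw [← Complex.exp_neg]
  ring_nf

lemma omega_pow_n (n : ℕ) (hn : n ≠ 0) :
    (Complex.exp (-2 * Real.pi * Complex.I / n)) ^ n = 1 := by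
  rw [← Complex.exp_nat_mul]
  have : (n : ℂ) ≠ 0 := Nat.cast_ne_zero.mpr hn
  have h : (n : ℂ) * (-2 * Real.pi * Complex.I / n) = (-1 : ℤ) * (2 * Real.pi * Complex.I) := by
    field_simp; ring
  rw [h, Complex.exp_int_mul_two_pi_mul_I]

noncomputable def invDft (n : ℕ) : Matrix (Fin n) (Fin n) ℂ :=
  fun j k => (Complex.exp (2 * Real.pi * Complex.I / n)) ^ (j.val * k.val) / n

lemma dft_mul_invDft (n : ℕ) (hn : n ≠ 0) : dftMatrix n * invDft n = 1 := by
  have hprim := Complex.isPrimitiveRoot_exp n hn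
  set ζ := Complex.exp (2 * Real.pi * Complex.I / n) with hζ
  have hnc : (n : ℂ) ≠ 0 := Nat.cast_ne_zero.mpr hn
  ext j k
  rw [Matrix.mul_apply]
  simp only [dftMatrix, invDft, omega_eq_inv, Matrix.one_apply, ← hζ]
  have key : ∀ a : Fin n, ζ⁻¹ ^ (j.val * a.val) * (ζ ^ (a.val * k.val) / n)
      = (ζ ^ ((k.val : ℤ) - (j.val : ℤ))) ^ a.val / n := by
    intro a
    have hz : ζ ≠ 0 := Complex.exp_ne_zero _
    rw [← zpow_natCast (ζ ^ ((k.val:ℤ) - (j.val:ℤ))), ← _root_.zpow_mul]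
    rw [inv_pow, ← zpow_natCast ζ (j.val * a.val), ← _root_.zpow_neg, ← zpow_natCast ζ (a.val * k.val)]
    rw [div_eq_mul_inv, div_eq_mul_inv, ← mul_assoc, ← zpow_add₀ hz]
    congr 2
    push_cast
    ring
  rw [Finset.sum_congr rfl (fun a _ => key a)]
  by_cases hjk : j = k
  · subst hjk
    simp only [sub_self, zpow_zero, one_pow, if_pos rfl]
    rw [Finset.sum_const, Finset.card_univ, Fintype.card_fin]
    rw [if_pos trivial, nsmul_eq_mul]
    field_simp
  · rw [if_neg hjk]
    set x := ζ ^ ((k.val : ℤ) - (j.val : ℤ)) with hx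
    have hx1 : x ≠ 1 := by
      intro h
      have hd := (hprim.zpow_eq_one_iff_dvd _).mp h
      have : (k.val : ℤ) - (j.val : ℤ) = 0 := by
        refine Int.eq_zero_of_abs_lt_dvd hd ?_
        have hj := j.isLt; have hk := k.isLt
        rw [abs_sub_lt_iff]
        omega
      have : j.val = k.val := by omega
      exact hjk (Fin.ext this)
    have hxn : x ^ n = 1 := by
      rw [hx, ← zpow_natCast, ← _root_.zpow_mul, mul_comm, _root_.zpow_mul, zpow_natCast, hprim.pow_eq_one,
        _root_.one_zpow]
    rw [← Finset.sum_div, Fin.sum_univ_eq_sum_range (fun i => x ^ i), geom_sum_eq hx1, hxn]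
    simp

lemma dft_inv_spec (n : ℕ) (hn : n ≠ 0) : dftMatrix n * (dftMatrix n)⁻¹ = 1 := by
  rw [Matrix.inv_eq_right_inv (dft_mul_invDft n hn)]
  exact dft_mul_invDft n hn

lemma swap_lemma {n1 n2 n3 : ℕ} (hn : n3 ≠ 0) (A : TensorC n1 n2 n3) :
    (dftMatrix n3 ⊗ₖ (1 : Matrix (Fin n1) (Fin n1) ℂ)) * bcirc A =
      bdiag (dftSlices A) * (dftMatrix n3 ⊗ₖ (1 : Matrix (Fin n2) (Fin n2) ℂ)) := by
  haveI : NeZero n3 := ⟨hn⟩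
  set ω := Complex.exp (-2 * Real.pi * Complex.I / n3) with hω
  have hωn : ω ^ n3 = 1 := omega_pow_n n3 hn
  ext ⟨k, i⟩ ⟨l, i2⟩
  rw [Matrix.mul_apply, Matrix.mul_apply]
  rw [Fintype.sum_prod_type, Fintype.sum_prod_type]
  simp only [kroneckerMap_apply, bcirc, bdiag, dftSlices, dftMatrix, Matrix.one_apply,
    Matrix.sum_apply, Matrix.smul_apply, smul_eq_mul, mul_ite, ite_mul, mul_zero, zero_mul,
    mul_one, one_mul, Finset.sum_ite_eq, Finset.sum_ite_eq', Finset.mem_univ, if_pos]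
  rw [Finset.sum_mul]
  have hkn : (ω ^ k.val) ^ n3 = 1 := by rw [← pow_mul, mul_comm, pow_mul, hωn, one_pow]
  refine Fintype.sum_equiv (Equiv.subRight l) _ _ (fun j => ?_)
  simp only [Equiv.subRight_apply, ← hω]
  have h2 : ((j - l) + l : Fin n3) = j := sub_add_cancel j l
  have h1 : ω ^ (k.val * j.val) = ω ^ ((j - l).val * k.val) * ω ^ (k.val * l.val) := by
    calc ω ^ (k.val * j.val)
        = (ω ^ k.val) ^ (((j - l).val + l.val) % n3) := by
          conv_lhs => rw [← h2]
          rw [pow_mul, Fin.val_add]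
      _ = (ω ^ k.val) ^ ((j - l).val + l.val) := (pow_eq_pow_mod _ hkn).symm
      _ = ω ^ ((j - l).val * k.val) * ω ^ (k.val * l.val) := by
          rw [pow_add, ← pow_mul, ← pow_mul, mul_comm k.val (j - l).val]
  rw [h1]; ring

theorem bcirc_block_diagonalization {n1 n2 n3 : ℕ} (A : TensorC n1 n2 n3) :
    (dftMatrix n3 ⊗ₖ (1 : Matrix (Fin n1) (Fin n1) ℂ)) * bcirc A *
        ((dftMatrix n3)⁻¹ ⊗ₖ (1 : Matrix (Fin n2) (Fin n2) ℂ)) =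
      bdiag (dftSlices A) := by
  rcases Nat.eq_zero_or_pos n3 with h | h
  · subst h; ext p q; exact p.1.elim0
  · have hn : n3 ≠ 0 := h.ne'
    rw [swap_lemma hn, Matrix.mul_assoc, ← Matrix.mul_kronecker_mul, dft_inv_spec n3 hn,
      Matrix.one_mul, Matrix.one_kronecker_one, Matrix.mul_one]
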